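/- Let ι be a finite nonempty type (indexing routes), let J : (ι → ℝ) → ℝ be differentiable at S*, let κ ≥ 0, and for each r ∈ ι let q_r : ℝ → ℝ be nondecreasing and continuous at S*_r. Define the social cost Φ(S) = J(S) + Σ_{r∈ι} ∫₀^{S_r} (q_r(s) + κ) ds. If S* with 0 < S*_r < 1 for all r minimizes Φ over the box {S : 0 ≤ S_r ≤ 1 for all r}, then for every r ∈ ι: q_r(S*_r) = −∂J/∂S_r(S*) − κ. Equivalently, the socially optimal inconvenience-cost threshold on route r is θ̄_r = v_r(S*) − κ, where v_r(S) := −∂J/∂S_r(S) is the LMP spread on route r. -/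

import Mathlib

open Set intervalIntegral

/-- Lemma 1: first-order characterization of the socially optimal
operation for commuter EVs with fixed routes. If `S*` with `0 < S*_r < 1` minimizes
the social cost `Φ(S) = J(S) + Σ_r ∫₀^{S_r} (q_r(s) + κ) ds` over the unit box, then
`q_r(S*_r) = -∂J/∂S_r(S*) - κ` for every route `r`. -/
theorem commuter_social_optimum_first_order
    {ι : Type*} [Fintype ι] [Nonempty ι] [DecidableEq ι]
    (J : (ι → ℝ) → ℝ) (Sstar : ι → ℝ)
    (hJ : DifferentiableAt ℝ J Sstar)
    (κ : ℝ) (hκ : 0 ≤ κ)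
    (q : ι → ℝ → ℝ)
    (hq_mono : ∀ r, Monotone (q r))
    (hq_cont : ∀ r, ContinuousAt (q r) (Sstar r))
    (Φ : (ι → ℝ) → ℝ)
    (hΦ : ∀ S, Φ S = J S + ∑ r, ∫ s in (0:ℝ)..(S r), (q r s + κ))
    (hbox : ∀ r, 0 < Sstar r ∧ Sstar r < 1)
    (hmin : IsMinOn Φ {S : ι → ℝ | ∀ r, 0 ≤ S r ∧ S r ≤ 1} Sstar) :
    ∀ r, q r (Sstar r) = -(fderiv ℝ J Sstar (Pi.single r 1)) - κ := by
  intro r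
  -- the line through Sstar in direction `Pi.single r 1`
  set L : ℝ → (ι → ℝ) := fun t => Sstar + (t - Sstar r) • (Pi.single r (1:ℝ) : ι → ℝ) with hL
  have hLr : ∀ t, L t r = t := by
    intro t; simp [hL]
  have hLne : ∀ t i, i ≠ r → L t i = Sstar i := by
    intro t i hi; simp [hL, Pi.single_eq_of_ne hi]
  have hL0 : L (Sstar r) = Sstar := by
    funext i; by_cases hi : i = r
    · subst hi; simp [hLr]
    · simp [hLne _ _ hi]
  -- derivative of L
  have hLdiff : ∀ t, HasDerivAt L (Pi.single r 1) t := by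
    intro t
    have h1 : HasDerivAt (fun t : ℝ => t - Sstar r) 1 t :=
      (hasDerivAt_id t).sub_const _
    have h2 := h1.smul_const (Pi.single r (1:ℝ) : ι → ℝ)
    simpa [hL, one_smul] using h2.const_add Sstar
  -- derivative of J ∘ L at Sstar r
  have hJL : HasDerivAt (fun t => J (L t)) (fderiv ℝ J Sstar (Pi.single r 1)) (Sstar r) := by
    have hJ' : HasFDerivAt J (fderiv ℝ J Sstar) (L (Sstar r)) := by
      rw [hL0]; exact hJ.hasFDerivAt
    exact hJ'.comp_hasDerivAt (Sstar r) (hLdiff (Sstar r))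
  -- the integrand
  set f : ℝ → ℝ := fun s => q r s + κ with hf
  have hfmono : Monotone f := fun a b hab => by
    simp only [hf]; exact add_le_add_left (hq_mono r hab) κ
  have hfint : ∀ a b : ℝ, IntervalIntegrable f MeasureTheory.volume a b := by
    intro a b
    exact (hfmono.monotoneOn _).intervalIntegrable
  have hfmeas : StronglyMeasurableAtFilter f (nhds (Sstar r)) MeasureTheory.volume :=
    ⟨Set.univ, Filter.univ_mem, hfmono.measurable.stronglyMeasurable.aestronglyMeasurable⟩
  have hfcont : ContinuousAt f (Sstar r) := (hq_cont r).add continuousAt_const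
  have hFderiv : HasDerivAt (fun t => ∫ s in (0:ℝ)..t, f s) (f (Sstar r)) (Sstar r) :=
    intervalIntegral.integral_hasDerivAt_right (hfint 0 (Sstar r)) hfmeas hfcont
  -- Φ ∘ L and its derivative
  have hΦL : ∀ t, Φ (L t) = J (L t) + (∫ s in (0:ℝ)..t, f s)
      + ∑ i ∈ Finset.univ.erase r, ∫ s in (0:ℝ)..(Sstar i), (q i s + κ) := by
    intro t
    rw [hΦ]
    have : (∑ i, ∫ s in (0:ℝ)..(L t i), (q i s + κ))
        = (∫ s in (0:ℝ)..t, f s)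
          + ∑ i ∈ Finset.univ.erase r, ∫ s in (0:ℝ)..(Sstar i), (q i s + κ) := by
      rw [← Finset.add_sum_erase _ _ (Finset.mem_univ r), hLr]
      congr 1
      exact Finset.sum_congr rfl fun i hi => by
        rw [hLne _ _ (Finset.ne_of_mem_erase hi)]
    rw [this]; ring
  have hgderiv : HasDerivAt (fun t => Φ (L t))
      (fderiv ℝ J Sstar (Pi.single r 1) + f (Sstar r)) (Sstar r) := by
    have := (hJL.add hFderiv).add_const
      (∑ i ∈ Finset.univ.erase r, ∫ s in (0:ℝ)..(Sstar i), (q i s + κ))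
    refine HasDerivAt.congr_of_eventuallyEq this ?_
    filter_upwards with t
    rw [hΦL]; rfl
  -- local min at interior point
  have hlocal : IsLocalMin (fun t => Φ (L t)) (Sstar r) := by
    have hmem : Set.Ioo (0:ℝ) 1 ∈ nhds (Sstar r) :=
      Ioo_mem_nhds (hbox r).1 (hbox r).2
    filter_upwards [hmem] with t ht
    have hLt : L t ∈ {S : ι → ℝ | ∀ i, 0 ≤ S i ∧ S i ≤ 1} := by
      intro i
      by_cases hi : i = r
      · subst hi; rw [hLr]; exact ⟨ht.1.le, ht.2.le⟩
      · rw [hLne _ _ hi]; exact ⟨(hbox i).1.le, (hbox i).2.le⟩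
    have := hmin hLt
    simpa [hL0] using this
  have hzero := hlocal.hasDerivAt_eq_zero hgderiv
  have : f (Sstar r) = -(fderiv ℝ J Sstar (Pi.single r 1)) := by linarith
  simp only [hf] at this
  linarith
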